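/- Let p be an odd prime, v : ℚ_pˣ → ℤ the p-adic valuation, and for x, y ∈ ℚ_pˣ let s_p(x, y) ∈ (ℤ/pℤ)ˣ be the residue modulo p of (-1)^{v(x)v(y)} · x^{v(y)} · y^{-v(x)}. Then the equation x·R² + y·S² = 1 has a solution (R, S) ∈ ℚ_p × ℚ_p if and only if s_p(x, y)^{(p-1)/2} = 1, i.e. if and only if s_p(x, y) is a square in (ℤ/pℤ)ˣ. -/

import Mathlib

open Padic

variable {p : ℕ} [Fact p.Prime]

/-- residue of an element of `ℚ_p` of norm at most 1. -/
noncomputable def rQ (p : ℕ) [Fact p.Prime] (z : ℚ_[p]) : ZMod p :=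
  if h : ‖z‖ ≤ 1 then PadicInt.toZMod (⟨z, h⟩ : ℤ_[p]) else 0

lemma rQ_def (z : ℚ_[p]) (h : ‖z‖ ≤ 1) : rQ p z = PadicInt.toZMod (⟨z, h⟩ : ℤ_[p]) :=
  dif_pos h

lemma rQ_one : rQ p 1 = 1 := by
  rw [rQ_def (1 : ℚ_[p]) (by norm_num)]
  exact congrArg _ rfl |>.trans (map_one _)

lemma rQ_mul {a b : ℚ_[p]} (ha : ‖a‖ ≤ 1) (hb : ‖b‖ ≤ 1) :
    rQ p (a * b) = rQ p a * rQ p b := by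
  have hab : ‖a * b‖ ≤ 1 := by rw [norm_mul]; exact mul_le_one₀ ha (norm_nonneg _) hb
  rw [rQ_def _ ha, rQ_def _ hb, rQ_def _ hab]
  exact map_mul PadicInt.toZMod (show ℤ_[p] from ⟨a, ha⟩) (show ℤ_[p] from ⟨b, hb⟩)

lemma rQ_add {a b : ℚ_[p]} (ha : ‖a‖ ≤ 1) (hb : ‖b‖ ≤ 1) :
    rQ p (a + b) = rQ p a + rQ p b := by
  have hab : ‖a + b‖ ≤ 1 := le_trans (Padic.nonarchimedean _ _) (max_le ha hb)
  rw [rQ_def _ ha, rQ_def _ hb, rQ_def _ hab]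
  exact map_add PadicInt.toZMod (show ℤ_[p] from ⟨a, ha⟩) (show ℤ_[p] from ⟨b, hb⟩)

lemma rQ_neg {a : ℚ_[p]} (ha : ‖a‖ ≤ 1) : rQ p (-a) = - rQ p a := by
  have h : ‖-a‖ ≤ 1 := by rwa [norm_neg]
  rw [rQ_def _ ha, rQ_def _ h]
  exact map_neg PadicInt.toZMod (show ℤ_[p] from ⟨a, ha⟩)

lemma rQ_eq_zero {a : ℚ_[p]} (ha : ‖a‖ < 1) : rQ p a = 0 := by
  rw [rQ_def _ ha.le]
  have key : ∀ w : ℤ_[p], ‖w‖ < 1 → PadicInt.toZMod w = 0 := fun w hw => by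
    rw [← RingHom.mem_ker, PadicInt.ker_toZMod, PadicInt.maximalIdeal_eq_span_p,
      Ideal.mem_span_singleton, ← PadicInt.norm_lt_one_iff_dvd]
    exact hw
  exact key _ ha

lemma rQ_ne_zero {a : ℚ_[p]} (ha : ‖a‖ = 1) : rQ p a ≠ 0 := by
  rw [rQ_def _ ha.le]
  intro h
  have key : ∀ w : ℤ_[p], PadicInt.toZMod w = 0 → ‖w‖ < 1 := fun w hw => by
    rw [← RingHom.mem_ker, PadicInt.ker_toZMod, PadicInt.maximalIdeal_eq_span_p,
      Ideal.mem_span_singleton, ← PadicInt.norm_lt_one_iff_dvd] at hw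
    exact hw
  have h' := key _ h
  simp [PadicInt.norm_def, ha] at h'

lemma rQ_natCast (n : ℕ) : rQ p (n : ℚ_[p]) = (n : ZMod p) := by
  have h : ‖((n : ℚ_[p]))‖ ≤ 1 := by
    have := PadicInt.norm_le_one (n : ℤ_[p])
    rwa [PadicInt.norm_def, PadicInt.coe_natCast] at this
  rw [rQ_def _ h]
  have : (⟨(n : ℚ_[p]), h⟩ : ℤ_[p]) = (n : ℤ_[p]) := by
    ext; simp
  rw [this, map_natCast]

lemma toZMod_eq_zero_iff (w : ℤ_[p]) : PadicInt.toZMod w = 0 ↔ ‖w‖ < 1 := by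
  rw [← RingHom.mem_ker, PadicInt.ker_toZMod, PadicInt.maximalIdeal_eq_span_p,
    Ideal.mem_span_singleton, ← PadicInt.norm_lt_one_iff_dvd]

lemma isSquare_of_rQ (hp : p ≠ 2) {z : ℚ_[p]} (hz : ‖z‖ = 1) (h : IsSquare (rQ p z)) :
    IsSquare z := by
  set z' : ℤ_[p] := ⟨z, hz.le⟩ with hz'
  obtain ⟨c, hc⟩ := h
  rw [rQ_def _ hz.le] at hc
  have hc0 : c ≠ 0 := by
    intro h0
    apply rQ_ne_zero hz
    rw [rQ_def _ hz.le, hc, h0, mul_zero]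
  set a : ℤ_[p] := ((c.val : ℕ) : ℤ_[p]) with ha
  have hta : PadicInt.toZMod a = c := by
    rw [ha, map_natCast, ZMod.natCast_val, ZMod.cast_id]
  set F : Polynomial ℤ_[p] := Polynomial.X ^ 2 - Polynomial.C z' with hF
  have hFe : ∀ w : ℤ_[p], F.eval w = w ^ 2 - z' := by
    intro w; simp [hF]
  have hFd : ∀ w : ℤ_[p], F.derivative.eval w = 2 * w := by
    intro w
    simp [hF, Polynomial.derivative_sub, Polynomial.derivative_X_pow]
    exact Or.inl one_add_one_eq_two
  have h2 : (2 : ZMod p) ≠ 0 := by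
    intro h2
    have : ((2 : ℕ) : ZMod p) = 0 := by exact_mod_cast h2
    rw [ZMod.natCast_eq_zero_iff] at this
    exact hp ((Nat.prime_dvd_prime_iff_eq (Fact.out) Nat.prime_two).mp this)
  have hderiv : ‖F.derivative.eval a‖ = 1 := by
    rw [hFd]
    rcases lt_or_eq_of_le (PadicInt.norm_le_one (2 * a)) with h | h
    · exfalso
      rw [← toZMod_eq_zero_iff] at h
      rw [map_mul, hta] at h
      have : (PadicInt.toZMod (2 : ℤ_[p])) = (2 : ZMod p) := by
        rw [show ((2:ℤ_[p])) = ((2:ℕ):ℤ_[p]) by norm_num, map_natCast]; norm_num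
      rw [this] at h
      rcases mul_eq_zero.mp h with h | h
      exacts [h2 h, hc0 h]
    · exact h
  have heval : ‖F.eval a‖ < 1 := by
    rw [hFe, ← toZMod_eq_zero_iff, map_sub, map_pow, hta]
    have h' : PadicInt.toZMod z' = c * c := hc
    rw [h', sq]
    exact sub_self _
  obtain ⟨w, hw, -, -, -⟩ := hensels_lemma (F := F) (a := a) (by simp only [Polynomial.coe_aeval_eq_eval]; rw [hderiv]; simpa using heval)
  rw [Polynomial.coe_aeval_eq_eval, hFe, sub_eq_zero] at hw
  refine ⟨(w : ℚ_[p]), ?_⟩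
  have : ((w ^ 2 : ℤ_[p]) : ℚ_[p]) = ((z' : ℤ_[p]) : ℚ_[p]) := by rw [hw]
  rw [hz'] at this
  push_cast at this
  rw [← this]; ring

lemma isSquare_iff_rQ (hp : p ≠ 2) {z : ℚ_[p]} (hz : ‖z‖ = 1) :
    IsSquare z ↔ IsSquare (rQ p z) := by
  refine ⟨fun ⟨c, hc⟩ => ?_, isSquare_of_rQ hp hz⟩
  have hc1 : ‖c‖ = 1 := by
    have : ‖c‖ * ‖c‖ = 1 := by rw [← norm_mul, ← hc, hz]
    nlinarith [norm_nonneg c]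
  exact ⟨rQ p c, by rw [hc, rQ_mul hc1.le hc1.le]⟩

/-- Solvability of the conic. -/
def Sol (p : ℕ) [Fact p.Prime] (x y : ℚ_[p]) : Prop :=
  ∃ R S : ℚ_[p], x * R ^ 2 + y * S ^ 2 = 1

lemma sol_symm {x y : ℚ_[p]} (h : Sol p x y) : Sol p y x := by
  obtain ⟨R, S, h⟩ := h
  exact ⟨S, R, by rw [← h]; ring⟩

lemma sol_symm_iff {x y : ℚ_[p]} : Sol p x y ↔ Sol p y x := ⟨sol_symm, sol_symm⟩

lemma sol_mul_sq_iff {x y : ℚ_[p]} {c : ℚ_[p]} (hc : c ≠ 0) :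
    Sol p (x * c ^ 2) y ↔ Sol p x y := by
  constructor
  · rintro ⟨R, S, h⟩
    exact ⟨c * R, S, by rw [← h]; ring⟩
  · rintro ⟨R, S, h⟩
    refine ⟨R / c, S, by rw [← h]; field_simp⟩

lemma sol_of_isSquare {x : ℚ_[p]} (y : ℚ_[p]) (hx : x ≠ 0) (h : IsSquare x) : Sol p x y := by
  obtain ⟨c, hc⟩ := h
  have hc0 : c ≠ 0 := by rintro rfl; simp at hc; exact hx hc
  refine ⟨c⁻¹, 0, by rw [hc]; field_simp; ring⟩

lemma sol_of_neg_div {x y : ℚ_[p]} (hx : x ≠ 0) (hy : y ≠ 0)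
    (h : IsSquare (-(x * y⁻¹))) : Sol p x y := by
  obtain ⟨c, hc⟩ := h
  have hc0 : c ≠ 0 := by
    rintro rfl
    rw [mul_zero, neg_eq_zero, mul_eq_zero] at hc
    rcases hc with h | h
    exacts [hx h, hy (inv_eq_zero.mp h)]
  -- x = -(y * c^2)
  have hxe : x = -(y * (c * c)) := by
    field_simp at hc
    linear_combination -hc
  refine ⟨(1 - 1/(4*y)) / c, 1 + 1/(4 * y), ?_⟩
  rw [hxe]
  have h2 : (2 : ℚ_[p]) ≠ 0 := two_ne_zero
  field_simp
  ring

lemma one_lt_pR : (1 : ℝ) < p := by exact_mod_cast (Fact.out : p.Prime).one_lt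

lemma pR_pos : (0 : ℝ) < p := lt_trans one_pos one_lt_pR

lemma pzpow_inj {m n : ℤ} (h : (p : ℝ) ^ m = (p : ℝ) ^ n) : m = n :=
  (zpow_right_inj₀ pR_pos (ne_of_gt one_lt_pR)).mp h

lemma norm_eq_one_iff_val {x : ℚ_[p]} (hx : x ≠ 0) : ‖x‖ = 1 ↔ x.valuation = 0 := by
  rw [Padic.norm_eq_zpow_neg_valuation hx]
  constructor
  · intro h
    have h2 : (p : ℝ) ^ (-x.valuation) = (p : ℝ) ^ (0 : ℤ) := by rw [h, zpow_zero]
    have := pzpow_inj (p := p) h2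
    omega
  · intro h; rw [h]; norm_num

lemma val_mul {x y : ℚ_[p]} (hx : x ≠ 0) (hy : y ≠ 0) :
    (x * y).valuation = x.valuation + y.valuation := Padic.valuation_mul hx hy

lemma val_sq {x : ℚ_[p]} (hx : x ≠ 0) : (x ^ 2).valuation = 2 * x.valuation := by
  rw [sq, val_mul hx hx]; ring

lemma norm_eq_iff_val_eq {x y : ℚ_[p]} (hx : x ≠ 0) (hy : y ≠ 0) :
    ‖x‖ = ‖y‖ ↔ x.valuation = y.valuation := by
  rw [Padic.norm_eq_zpow_neg_valuation hx, Padic.norm_eq_zpow_neg_valuation hy]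
  constructor
  · intro h; have := pzpow_inj (p := p) h; omega
  · intro h; rw [h]

lemma rQ_sq {a : ℚ_[p]} (ha : ‖a‖ ≤ 1) : rQ p (a ^ 2) = rQ p a ^ 2 := by
  rw [sq, sq, rQ_mul ha ha]

lemma norm_eq_one_of_rQ_ne_zero {a : ℚ_[p]} (h1 : ‖a‖ ≤ 1) (h2 : rQ p a ≠ 0) : ‖a‖ = 1 := by
  rcases lt_or_eq_of_le h1 with h | h
  · exact absurd (rQ_eq_zero h) h2
  · exact h

lemma card_odd (hp : p ≠ 2) : Fintype.card (ZMod p) % 2 = 1 := by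
  rw [ZMod.card]
  exact Nat.odd_iff.mp ((Fact.out : p.Prime).odd_of_ne_two hp)

/-- If the residues are units, there is a residual solution. -/
lemma exists_res_sol (hp : p ≠ 2) {u w : ZMod p} (hu : u ≠ 0) (hw : w ≠ 0) :
    ∃ r s : ZMod p, u * r ^ 2 + w * s ^ 2 = 1 := by
  classical
  obtain ⟨r, s, hrs⟩ := FiniteField.exists_root_sum_quadratic
    (f := Polynomial.C u * Polynomial.X ^ 2)
    (g := Polynomial.C w * Polynomial.X ^ 2 - Polynomial.C 1)
    (by simpa using Polynomial.degree_C_mul_X_pow 2 hu)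
    (by
      rw [Polynomial.degree_sub_eq_left_of_degree_lt]
      · simpa using Polynomial.degree_C_mul_X_pow 2 hw
      · rw [Polynomial.degree_C_mul_X_pow 2 hw]
        exact lt_of_le_of_lt (Polynomial.degree_C_le) (by norm_num))
    (card_odd hp)
  refine ⟨r, s, ?_⟩
  simp only [Polynomial.eval_add, Polynomial.eval_sub, Polynomial.eval_mul, Polynomial.eval_pow,
    Polynomial.eval_C, Polynomial.eval_X] at hrs
  linear_combination hrs

lemma norm_natCast_le_one (n : ℕ) : ‖((n : ℚ_[p]))‖ ≤ 1 := by
  have := PadicInt.norm_le_one (n : ℤ_[p])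
  rwa [PadicInt.norm_def, PadicInt.coe_natCast] at this

lemma rQ_lift (s : ZMod p) : rQ p ((s.val : ℕ) : ℚ_[p]) = s := by
  rw [rQ_natCast, ZMod.natCast_val, ZMod.cast_id]

/-- Core case both valuations zero: always solvable, given a nontrivial residual solution. -/
lemma case00aux (hp : p ≠ 2) {x y : ℚ_[p]} (hx : ‖x‖ = 1) (hy : ‖y‖ = 1)
    {r s : ZMod p} (hr : r ≠ 0) (heq : rQ p x * r ^ 2 + rQ p y * s ^ 2 = 1) :
    Sol p x y := by
  have hx0 : x ≠ 0 := by intro h; rw [h] at hx; simp at hx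
  set S : ℚ_[p] := ((s.val : ℕ) : ℚ_[p]) with hS
  have hSnorm : ‖S‖ ≤ 1 := norm_natCast_le_one _
  have hSres : rQ p S = s := rQ_lift s
  set d : ℚ_[p] := 1 - y * S ^ 2 with hd
  have hdnorm : ‖d‖ ≤ 1 := by
    rw [hd, sub_eq_add_neg]
    refine le_trans (Padic.nonarchimedean _ _) (max_le (by norm_num) ?_)
    rw [norm_neg, norm_mul, hy, one_mul]
    calc ‖S ^ 2‖ = ‖S‖ ^ 2 := by rw [norm_pow]
    _ ≤ 1 := pow_le_one₀ (norm_nonneg _) hSnorm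
  have hS2 : ‖S ^ 2‖ ≤ 1 := by
    rw [norm_pow]; exact pow_le_one₀ (norm_nonneg _) hSnorm
  have hyS2 : ‖y * S ^ 2‖ ≤ 1 := by
    rw [norm_mul, hy, one_mul]; exact hS2
  have hdres : rQ p d = rQ p x * r ^ 2 := by
    rw [hd, sub_eq_add_neg, rQ_add (by norm_num) (by rwa [norm_neg]),
      rQ_one, rQ_neg hyS2, rQ_mul hy.le hS2, rQ_sq hSnorm, hSres]
    linear_combination -heq
  have hdres0 : rQ p d ≠ 0 := by
    rw [hdres]
    exact mul_ne_zero (rQ_ne_zero hx) (pow_ne_zero _ hr)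
  have hdnorm1 : ‖d‖ = 1 := norm_eq_one_of_rQ_ne_zero hdnorm hdres0
  set e : ℚ_[p] := d * x⁻¹ with he
  have henorm : ‖e‖ = 1 := by rw [he, norm_mul, norm_inv, hdnorm1, hx]; norm_num
  have heres : rQ p e = r ^ 2 := by
    have hde : d = e * x := by rw [he]; field_simp
    have h2 := hdres
    rw [hde, rQ_mul henorm.le hx.le] at h2
    exact mul_right_cancel₀ (rQ_ne_zero hx) (by linear_combination h2)
  have : IsSquare e := isSquare_of_rQ hp henorm ⟨r, by rw [heres, sq]⟩
  obtain ⟨c, hc⟩ := this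
  refine ⟨c, S, ?_⟩
  have : x * e = d := by rw [he]; field_simp
  rw [← sq] at hc
  rw [← hc, this, hd]
  ring

lemma case00 (hp : p ≠ 2) {x y : ℚ_[p]} (hx : ‖x‖ = 1) (hy : ‖y‖ = 1) : Sol p x y := by
  obtain ⟨r, s, hrs⟩ := exists_res_sol hp (rQ_ne_zero hx) (rQ_ne_zero hy)
  by_cases hr : r = 0
  · have hs : s ≠ 0 := by
      intro hs
      rw [hr, hs] at hrs
      simp at hrs
    refine sol_symm (case00aux hp hy hx (r := s) (s := r) hs ?_)
    linear_combination hrs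
  · exact case00aux hp hx hy hr hrs

lemma norm_ne_one_of_odd_val {z : ℚ_[p]} (hz : z ≠ 0) (h : z.valuation % 2 = 1) : ‖z‖ ≠ 1 := by
  intro h1
  rw [norm_eq_one_iff_val hz] at h1
  omega

lemma case01 (hp : p ≠ 2) {x y : ℚ_[p]} (hx0 : x ≠ 0) (hy0 : y ≠ 0)
    (hvx : x.valuation = 0) (hvy : y.valuation = 1) :
    Sol p x y ↔ IsSquare (rQ p x) := by
  have hx1 : ‖x‖ = 1 := (norm_eq_one_iff_val hx0).mpr hvx
  constructor
  · rintro ⟨R, S, heq⟩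
    by_cases hS : S = 0
    · -- x * R^2 = 1, so x is a square
      rw [hS] at heq
      have hR : R ≠ 0 := by
        intro h; rw [h] at heq; simp at heq
      have hxsq : IsSquare x := ⟨R⁻¹, by field_simp; linear_combination heq⟩
      exact (isSquare_iff_rQ hp hx1).mp hxsq
    · by_cases hR : R = 0
      · exfalso
        rw [hR] at heq
        simp only [ne_eq, OfNat.ofNat_ne_zero, not_false_eq_true, zero_pow, mul_zero,
          zero_add] at heq
        have : (y * S ^ 2).valuation = (1 : ℚ_[p]).valuation := by rw [heq]
        rw [val_mul hy0 (pow_ne_zero _ hS), val_sq hS, hvy, Padic.valuation_one] at this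
        omega
      · -- both nonzero
        set A := x * R ^ 2 with hA
        set B := y * S ^ 2 with hB
        have hA0 : A ≠ 0 := mul_ne_zero hx0 (pow_ne_zero _ hR)
        have hB0 : B ≠ 0 := mul_ne_zero hy0 (pow_ne_zero _ hS)
        have hvA : A.valuation = 2 * R.valuation := by
          rw [hA, val_mul hx0 (pow_ne_zero _ hR), val_sq hR, hvx]; ring
        have hvB : B.valuation = 1 + 2 * S.valuation := by
          rw [hB, val_mul hy0 (pow_ne_zero _ hS), val_sq hS, hvy]
        have hne : ‖A‖ ≠ ‖B‖ := by
          rw [Ne, norm_eq_iff_val_eq hA0 hB0, hvA, hvB]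
          omega
        have hmax : max ‖A‖ ‖B‖ = 1 := by
          rw [← Padic.add_eq_max_of_ne hne, heq, norm_one]
        have hB1 : ‖B‖ ≠ 1 := norm_ne_one_of_odd_val hB0 (by omega)
        have hA1 : ‖A‖ = 1 := by
          rcases max_choice ‖A‖ ‖B‖ with h | h
          · rw [← hmax, h]
          · exact absurd (h ▸ hmax) hB1
        have hBlt : ‖B‖ < 1 := by
          rcases lt_or_ge ‖B‖ 1 with h | h
          · exact h
          · exact absurd (le_antisymm (le_trans (le_max_right ‖A‖ ‖B‖) hmax.le) h).symm
              (fun hh => hB1 hh.symm)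
        -- residue computation
        have hResA : rQ p A = 1 := by
          have hAB : A = 1 + (-B) := by rw [← heq]; ring
          rw [hAB, rQ_add (by norm_num) (by rw [norm_neg]; exact hBlt.le), rQ_one,
            rQ_neg hBlt.le, rQ_eq_zero hBlt]
          ring
        have hRnorm : ‖R‖ = 1 := by
          have : ‖A‖ = ‖x‖ * ‖R‖ ^ 2 := by rw [hA, norm_mul, norm_pow]
          rw [hA1, hx1, one_mul] at this
          nlinarith [norm_nonneg R]
        have hR2 : ‖R ^ 2‖ ≤ 1 := by rw [norm_pow, hRnorm]; norm_num
        have : rQ p x * rQ p R ^ 2 = 1 := by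
          rw [← rQ_sq hRnorm.le, ← rQ_mul hx1.le hR2, ← hA, hResA]
        refine ⟨(rQ p R)⁻¹, ?_⟩
        have hrR : rQ p R ≠ 0 := rQ_ne_zero hRnorm
        field_simp
        linear_combination this
  · intro h
    exact sol_of_isSquare y hx0 (isSquare_of_rQ hp hx1 h)

lemma case11 (hp : p ≠ 2) {x y : ℚ_[p]} (hx0 : x ≠ 0) (hy0 : y ≠ 0)
    (hvx : x.valuation = 1) (hvy : y.valuation = 1) :
    Sol p x y ↔ IsSquare (rQ p (-(x * y⁻¹))) := by
  have hxy0 : x * y⁻¹ ≠ 0 := mul_ne_zero hx0 (inv_ne_zero hy0)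
  have hz1 : ‖-(x * y⁻¹)‖ = 1 := by
    rw [norm_neg, norm_mul, norm_inv, Padic.norm_eq_zpow_neg_valuation hx0, Padic.norm_eq_zpow_neg_valuation hy0,
      hvx, hvy]
    field_simp
    exact div_self (pR_pos (p := p)).ne'
  constructor
  · rintro ⟨R, S, heq⟩
    by_cases hS : S = 0
    · exfalso
      rw [hS] at heq
      simp only [ne_eq, OfNat.ofNat_ne_zero, not_false_eq_true, zero_pow, mul_zero,
        add_zero] at heq
      have hR : R ≠ 0 := by intro h; rw [h] at heq; simp at heq
      have : (x * R ^ 2).valuation = (1 : ℚ_[p]).valuation := by rw [heq]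
      rw [val_mul hx0 (pow_ne_zero _ hR), val_sq hR, hvx, Padic.valuation_one] at this
      omega
    · by_cases hR : R = 0
      · exfalso
        rw [hR] at heq
        simp only [ne_eq, OfNat.ofNat_ne_zero, not_false_eq_true, zero_pow, mul_zero,
          zero_add] at heq
        have : (y * S ^ 2).valuation = (1 : ℚ_[p]).valuation := by rw [heq]
        rw [val_mul hy0 (pow_ne_zero _ hS), val_sq hS, hvy, Padic.valuation_one] at this
        omega
      · set A := x * R ^ 2 with hA
        set B := y * S ^ 2 with hB
        have hA0 : A ≠ 0 := mul_ne_zero hx0 (pow_ne_zero _ hR)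
        have hB0 : B ≠ 0 := mul_ne_zero hy0 (pow_ne_zero _ hS)
        have hvA : A.valuation = 1 + 2 * R.valuation := by
          rw [hA, val_mul hx0 (pow_ne_zero _ hR), val_sq hR, hvx]
        have hvB : B.valuation = 1 + 2 * S.valuation := by
          rw [hB, val_mul hy0 (pow_ne_zero _ hS), val_sq hS, hvy]
        have hA1 : ‖A‖ ≠ 1 := norm_ne_one_of_odd_val hA0 (by omega)
        have hB1 : ‖B‖ ≠ 1 := norm_ne_one_of_odd_val hB0 (by omega)
        -- equal valuations
        have hvAB : A.valuation = B.valuation := by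
          by_contra hne
          have hne' : ‖A‖ ≠ ‖B‖ := fun h => hne ((norm_eq_iff_val_eq hA0 hB0).mp h)
          have hmax : max ‖A‖ ‖B‖ = 1 := by
            rw [← Padic.add_eq_max_of_ne hne', heq, norm_one]
          rcases max_choice ‖A‖ ‖B‖ with h | h
          · exact hA1 (h ▸ hmax)
          · exact hB1 (h ▸ hmax)
        -- the common valuation is at most -1
        have hm : A.valuation ≤ -1 := by
          have hle : (1 : ℝ) ≤ max ‖A‖ ‖B‖ := by
            calc (1 : ℝ) = ‖A + B‖ := by rw [heq, norm_one]
            _ ≤ max ‖A‖ ‖B‖ := Padic.nonarchimedean A B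
          by_contra hcon
          push_neg at hcon
          have hge : A.valuation ≥ 0 := by omega
          have hBv : B.valuation ≥ 0 := hvAB ▸ hge
          have h1 : ‖A‖ ≤ 1 := by
            rw [Padic.norm_eq_zpow_neg_valuation hA0]
            calc ((p : ℝ)) ^ (-A.valuation) ≤ (p : ℝ) ^ (0 : ℤ) :=
              zpow_le_zpow_right₀ one_lt_pR.le (by omega)
            _ = 1 := zpow_zero _
          have h2 : ‖B‖ ≤ 1 := by
            rw [Padic.norm_eq_zpow_neg_valuation hB0]
            calc ((p : ℝ)) ^ (-B.valuation) ≤ (p : ℝ) ^ (0 : ℤ) :=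
              zpow_le_zpow_right₀ one_lt_pR.le (by omega)
            _ = 1 := zpow_zero _
          have : max ‖A‖ ‖B‖ = 1 := le_antisymm (max_le h1 h2) hle
          rcases max_choice ‖A‖ ‖B‖ with h | h
          · exact hA1 (h ▸ this)
          · exact hB1 (h ▸ this)
        -- now ‖B⁻¹‖ < 1
        have hBinv : ‖B⁻¹‖ < 1 := by
          rw [norm_inv, Padic.norm_eq_zpow_neg_valuation hB0, ← zpow_neg, neg_neg]
          calc ((p : ℝ)) ^ B.valuation ≤ (p : ℝ) ^ (-1 : ℤ) :=
            zpow_le_zpow_right₀ one_lt_pR.le (by omega)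
          _ < 1 := by
            rw [zpow_neg_one]
            rw [inv_lt_one_iff₀]
            right; exact one_lt_pR
        set w := A * B⁻¹ with hw
        have hwB : w = -1 + B⁻¹ := by
          have : A = 1 - B := by linear_combination heq
          rw [hw, this]
          field_simp
          ring
        have hwres : rQ p w = -1 := by
          rw [hwB, rQ_add (by rw [norm_neg, norm_one]) hBinv.le, rQ_neg (by rw [norm_one]),
            rQ_one, rQ_eq_zero hBinv, add_zero]
        have hne2 : ‖(-1 : ℚ_[p])‖ ≠ ‖B⁻¹‖ := by
          rw [norm_neg, norm_one]
          intro h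
          rw [← h] at hBinv
          exact lt_irrefl _ hBinv
        have hwnorm : ‖w‖ = 1 := by
          rw [hwB, Padic.add_eq_max_of_ne hne2, norm_neg, norm_one]
          exact max_eq_left hBinv.le
        set u := R * S⁻¹ with hu
        have hu0 : u ≠ 0 := mul_ne_zero hR (inv_ne_zero hS)
        have hwu : w = (x * y⁻¹) * u ^ 2 := by
          rw [hw, hA, hB, hu]
          field_simp
          try ring
        have hxyn : ‖x * y⁻¹‖ = 1 := by rw [← norm_neg]; exact hz1
        have hunorm : ‖u‖ = 1 := by
          have h1 : ‖w‖ = ‖x * y⁻¹‖ * ‖u‖ ^ 2 := by rw [hwu, norm_mul, norm_pow]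
          rw [hwnorm, hxyn, one_mul] at h1
          nlinarith [norm_nonneg u]
        have hu2 : ‖u ^ 2‖ ≤ 1 := by rw [norm_pow, hunorm]; norm_num
        have hfinal : rQ p (x * y⁻¹) * rQ p u ^ 2 = -1 := by
          rw [← rQ_sq hunorm.le, ← rQ_mul hxyn.le hu2, ← hwu, hwres]
        have hzres : rQ p (-(x * y⁻¹)) = - rQ p (x * y⁻¹) := rQ_neg hxyn.le
        refine ⟨(rQ p u)⁻¹, ?_⟩
        have hru : rQ p u ≠ 0 := rQ_ne_zero hunorm
        have hinv : -rQ p (x * y⁻¹) = (rQ p u ^ 2)⁻¹ :=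
          eq_inv_of_mul_eq_one_left (by linear_combination -hfinal)
        rw [hzres, hinv, sq, mul_inv]
  · intro h
    exact sol_of_neg_div hx0 hy0 (isSquare_of_rQ hp hz1 h)

lemma tame_core (X Y Z : ℚ_[p]) (hY : Y ≠ 0) (a b c : ℤ) :
    (-1 : ℚ_[p]) ^ ((a + 2*c) * b) * (X * Z ^ 2) ^ b * Y ^ (-(a + 2*c)) =
    ((-1 : ℚ_[p]) ^ (a * b) * X ^ b * Y ^ (-a)) * (Z ^ b * Y ^ (-c)) ^ 2 := by
  have h1 : (-1 : ℚ_[p]) ≠ 0 := by norm_num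
  have e1 : (a + 2*c) * b = a*b + 2*(c*b) := by ring
  have e2 : -(a + 2*c) = -a + (-c)*2 := by ring
  have e3 : ((Z^2 : ℚ_[p]))^b = (Z^b)^2 := by
    rw [← zpow_natCast Z 2, ← zpow_mul, ← zpow_natCast (Z^b) 2, ← zpow_mul]
    ring_nf
  have e4 : (Y : ℚ_[p]) ^ ((-c)*2) = (Y^(-c))^(2:ℕ) := by
    rw [← zpow_natCast (Y^(-c)) 2, ← zpow_mul]
    norm_num
  rw [e1, e2, zpow_add₀ h1, zpow_add₀ hY, mul_zpow, zpow_mul (-1 : ℚ_[p]) 2 (c*b),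
    show ((-1 : ℚ_[p]) ^ (2:ℤ)) = 1 by norm_num, one_zpow, e4, e3, mul_pow]
  ring

lemma tame_core_right (X Y W : ℚ_[p]) (hX : X ≠ 0) (a b e : ℤ) :
    (-1 : ℚ_[p]) ^ (a * (b + 2*e)) * X ^ (b + 2*e) * (Y * W ^ 2) ^ (-a) =
    ((-1 : ℚ_[p]) ^ (a * b) * X ^ b * Y ^ (-a)) * (X ^ e * W ^ (-a)) ^ 2 := by
  have h1 : (-1 : ℚ_[p]) ≠ 0 := by norm_num
  have e1 : a * (b + 2*e) = a*b + 2*(a*e) := by ring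
  have e2 : b + 2*e = b + e*2 := by ring
  have e3 : ((W^2 : ℚ_[p]))^(-a) = (W^(-a))^2 := by
    rw [← zpow_natCast W 2, ← zpow_mul, ← zpow_natCast (W^(-a)) 2, ← zpow_mul]
    ring_nf
  have e4 : (X : ℚ_[p]) ^ (e*2) = (X^e)^(2:ℕ) := by
    rw [← zpow_natCast (X^e) 2, ← zpow_mul]
    norm_num
  rw [e1, e2, zpow_add₀ h1, zpow_add₀ hX, mul_zpow, zpow_mul (-1 : ℚ_[p]) 2 (a*e),
    show ((-1 : ℚ_[p]) ^ (2:ℤ)) = 1 by norm_num, one_zpow, e4, e3, mul_pow]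
  ring

lemma val_zpow (x : ℚ_[p]) (hx : x ≠ 0) (k : ℤ) :
    (x ^ k).valuation = k * x.valuation := by
  have hxk : x ^ k ≠ 0 := zpow_ne_zero _ hx
  apply neg_injective
  apply pzpow_inj (p := p)
  rw [← Padic.norm_eq_zpow_neg_valuation hxk, norm_zpow, Padic.norm_eq_zpow_neg_valuation hx, ← zpow_mul]
  congr 1
  ring

/-- The element `(-1)^(v(x)v(y)) · x^(v(y)) · y^(-v(x))` of `ℚ_pˣ`, where `v` is the
p-adic valuation. -/
noncomputable def padicTame (p : ℕ) [Fact p.Prime] (x y : ℚ_[p]ˣ) : ℚ_[p]ˣ :=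
  (-1) ^ ((x : ℚ_[p]).valuation * (y : ℚ_[p]).valuation) *
    x ^ (y : ℚ_[p]).valuation * y ^ (-(x : ℚ_[p]).valuation)

lemma tame_coe (x y : ℚ_[p]ˣ) : ((padicTame p x y : ℚ_[p]ˣ) : ℚ_[p]) =
    (-1 : ℚ_[p]) ^ ((x : ℚ_[p]).valuation * (y : ℚ_[p]).valuation) *
      (x : ℚ_[p]) ^ (y : ℚ_[p]).valuation * (y : ℚ_[p]) ^ (-(x : ℚ_[p]).valuation) := by
  simp [padicTame, Units.val_zpow_eq_zpow_val]

lemma tame_norm (x y : ℚ_[p]ˣ) : ‖((padicTame p x y : ℚ_[p]ˣ) : ℚ_[p])‖ = 1 := by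
  have hx : (x : ℚ_[p]) ≠ 0 := Units.ne_zero x
  have hy : (y : ℚ_[p]) ≠ 0 := Units.ne_zero y
  rw [tame_coe, norm_mul, norm_mul, norm_zpow, norm_zpow, norm_zpow, norm_neg, norm_one,
    one_zpow, one_mul, Padic.norm_eq_zpow_neg_valuation hx, Padic.norm_eq_zpow_neg_valuation hy, ← zpow_mul,
    ← zpow_mul, ← zpow_add₀ (ne_of_gt (pR_pos (p := p)))]
  rw [show -(x : ℚ_[p]).valuation * (y : ℚ_[p]).valuation +
    -(y : ℚ_[p]).valuation * -(x : ℚ_[p]).valuation = 0 by ring, zpow_zero]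

lemma tame_mul_sq (x y z : ℚ_[p]ˣ) :
    padicTame p (x * z ^ 2) y =
      padicTame p x y * (z ^ (y : ℚ_[p]).valuation * y ^ (-(z : ℚ_[p]).valuation)) ^ 2 := by
  have hval : ((x * z ^ 2 : ℚ_[p]ˣ) : ℚ_[p]).valuation
      = (x : ℚ_[p]).valuation + 2 * (z : ℚ_[p]).valuation := by
    have hz2 : ((z ^ 2 : ℚ_[p]ˣ) : ℚ_[p]) ≠ 0 := Units.ne_zero _
    rw [Units.val_mul, val_mul (Units.ne_zero x) hz2, Units.val_pow_eq_pow_val,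
      val_sq (Units.ne_zero z)]
  ext
  rw [Units.val_mul, tame_coe, tame_coe, hval, Units.val_mul, Units.val_pow_eq_pow_val]
  push_cast [Units.val_zpow_eq_zpow_val, Units.val_mul, Units.val_pow_eq_pow_val]
  exact tame_core _ _ _ (Units.ne_zero y) _ _ _

lemma tame_mul_sq_right (x y w : ℚ_[p]ˣ) :
    padicTame p x (y * w ^ 2) =
      padicTame p x y * (x ^ (w : ℚ_[p]).valuation * w ^ (-(x : ℚ_[p]).valuation)) ^ 2 := by
  have hval : ((y * w ^ 2 : ℚ_[p]ˣ) : ℚ_[p]).valuation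
      = (y : ℚ_[p]).valuation + 2 * (w : ℚ_[p]).valuation := by
    have hw2 : ((w ^ 2 : ℚ_[p]ˣ) : ℚ_[p]) ≠ 0 := Units.ne_zero _
    rw [Units.val_mul, val_mul (Units.ne_zero y) hw2, Units.val_pow_eq_pow_val,
      val_sq (Units.ne_zero w)]
  ext
  rw [Units.val_mul, tame_coe, tame_coe, hval, Units.val_mul, Units.val_pow_eq_pow_val]
  push_cast [Units.val_zpow_eq_zpow_val, Units.val_mul, Units.val_pow_eq_pow_val]
  exact tame_core_right _ _ _ (Units.ne_zero x) _ _ _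

lemma isSquare_mul_sq_iff {K : Type*} [Field K] {a q : K} (hq : q ≠ 0) :
    IsSquare (a * q ^ 2) ↔ IsSquare a := by
  constructor
  · rintro ⟨c, hc⟩
    refine ⟨c * q⁻¹, ?_⟩
    field_simp
    linear_combination hc
  · rintro ⟨c, hc⟩
    exact ⟨c * q, by rw [hc]; ring⟩

lemma isSquare_inv_iff {K : Type*} [Field K] {a : K} : IsSquare a⁻¹ ↔ IsSquare a := by
  constructor
  · rintro ⟨c, hc⟩
    by_cases ha : a = 0
    · exact ⟨0, by rw [ha]; ring⟩
    · refine ⟨c⁻¹, ?_⟩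
      have : a⁻¹ ≠ 0 := inv_ne_zero ha
      rw [← mul_inv]
      rw [← hc, inv_inv]
  · rintro ⟨c, hc⟩
    exact ⟨c⁻¹, by rw [hc, mul_inv]⟩

lemma isSquare_rQ_of_eq_mul_sq {t t' f : ℚ_[p]} (h : t = t' * f ^ 2)
    (ht : ‖t‖ = 1) (ht' : ‖t'‖ = 1) :
    (IsSquare (rQ p t) ↔ IsSquare (rQ p t')) := by
  have hf : ‖f‖ = 1 := by
    have h2 : ‖t‖ = ‖t'‖ * ‖f‖ ^ 2 := by rw [h, norm_mul, norm_pow]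
    rw [ht, ht', one_mul] at h2
    nlinarith [norm_nonneg f]
  have hf2 : ‖f ^ 2‖ ≤ 1 := by rw [norm_pow, hf]; norm_num
  have hres : rQ p t = rQ p t' * (rQ p f) ^ 2 := by
    rw [h, rQ_mul ht'.le hf2, rQ_sq hf.le]
  rw [hres]
  exact isSquare_mul_sq_iff (rQ_ne_zero hf)

lemma rQ_inv {a : ℚ_[p]} (ha : ‖a‖ = 1) : rQ p a⁻¹ = (rQ p a)⁻¹ := by
  have ha0 : a ≠ 0 := by intro h; rw [h] at ha; simp at ha
  have hai : ‖a⁻¹‖ = 1 := by rw [norm_inv, ha]; norm_num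
  have : rQ p a * rQ p a⁻¹ = 1 := by
    rw [← rQ_mul ha.le hai.le, mul_inv_cancel₀ ha0, rQ_one]
  field_simp [rQ_ne_zero ha] at this ⊢
  linear_combination this

lemma master (hp : p ≠ 2) (x y : ℚ_[p]ˣ) :
    Sol p (x : ℚ_[p]) (y : ℚ_[p]) ↔ IsSquare (rQ p ((padicTame p x y : ℚ_[p]ˣ) : ℚ_[p])) := by
  classical
  have hp0 : ((p : ℚ_[p])) ≠ 0 := Nat.cast_ne_zero.mpr (Fact.out : p.Prime).ne_zero
  set π : ℚ_[p]ˣ := Units.mk0 (p : ℚ_[p]) hp0 with hπ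
  have hπv : ((π : ℚ_[p])).valuation = 1 := Padic.valuation_p
  set a := ((x : ℚ_[p])).valuation with ha
  set b := ((y : ℚ_[p])).valuation with hb
  set z : ℚ_[p]ˣ := π ^ (-(a / 2)) with hz
  set w : ℚ_[p]ˣ := π ^ (-(b / 2)) with hw
  have hzv : ((z : ℚ_[p])).valuation = -(a / 2) := by
    rw [hz, Units.val_zpow_eq_zpow_val, val_zpow _ (Units.ne_zero π), hπv, mul_one]
  have hwv : ((w : ℚ_[p])).valuation = -(b / 2) := by
    rw [hw, Units.val_zpow_eq_zpow_val, val_zpow _ (Units.ne_zero π), hπv, mul_one]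
  set x' : ℚ_[p]ˣ := x * z ^ 2 with hx'
  set y' : ℚ_[p]ˣ := y * w ^ 2 with hy'
  have hx'v : ((x' : ℚ_[p])).valuation = a % 2 := by
    rw [hx', Units.val_mul, val_mul (Units.ne_zero x) (Units.ne_zero (z ^ 2)),
      Units.val_pow_eq_pow_val, val_sq (Units.ne_zero z), hzv]
    omega
  have hy'v : ((y' : ℚ_[p])).valuation = b % 2 := by
    rw [hy', Units.val_mul, val_mul (Units.ne_zero y) (Units.ne_zero (w ^ 2)),
      Units.val_pow_eq_pow_val, val_sq (Units.ne_zero w), hwv]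
    omega
  -- solvability transfer
  have hsol : Sol p (x : ℚ_[p]) (y : ℚ_[p]) ↔ Sol p (x' : ℚ_[p]) (y' : ℚ_[p]) := by
    have h1 : ((x' : ℚ_[p])) = (x : ℚ_[p]) * ((z : ℚ_[p])) ^ 2 := by
      rw [hx', Units.val_mul, Units.val_pow_eq_pow_val]
    have h2 : ((y' : ℚ_[p])) = (y : ℚ_[p]) * ((w : ℚ_[p])) ^ 2 := by
      rw [hy', Units.val_mul, Units.val_pow_eq_pow_val]
    have hstep : ∀ u v c : ℚ_[p], c ≠ 0 → (Sol p u (v * c ^ 2) ↔ Sol p u v) := by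
      intro u v c hc
      rw [sol_symm_iff, sol_mul_sq_iff hc, sol_symm_iff]
    rw [h1, h2, sol_mul_sq_iff (Units.ne_zero z), hstep _ _ _ (Units.ne_zero w)]
  -- residue-square transfer
  have hsq : IsSquare (rQ p ((padicTame p x y : ℚ_[p]ˣ) : ℚ_[p])) ↔
      IsSquare (rQ p ((padicTame p x' y' : ℚ_[p]ˣ) : ℚ_[p])) := by
    have t1 := tame_mul_sq x y z
    have t2 := tame_mul_sq_right x' y w
    rw [← hx'] at t1
    rw [← hy'] at t2
    have c1 : ((padicTame p x' y : ℚ_[p]ˣ) : ℚ_[p]) =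
        ((padicTame p x y : ℚ_[p]ˣ) : ℚ_[p]) *
          (((z ^ (y : ℚ_[p]).valuation * y ^ (-(z : ℚ_[p]).valuation) : ℚ_[p]ˣ)) : ℚ_[p]) ^ 2 := by
      rw [t1, Units.val_mul, Units.val_pow_eq_pow_val]
    have c2 : ((padicTame p x' y' : ℚ_[p]ˣ) : ℚ_[p]) =
        ((padicTame p x' y : ℚ_[p]ˣ) : ℚ_[p]) *
          (((x' ^ (w : ℚ_[p]).valuation * w ^ (-(x' : ℚ_[p]).valuation) : ℚ_[p]ˣ)) : ℚ_[p]) ^ 2 := by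
      rw [t2, Units.val_mul, Units.val_pow_eq_pow_val]
    rw [isSquare_rQ_of_eq_mul_sq c2 (tame_norm _ _) (tame_norm _ _),
      isSquare_rQ_of_eq_mul_sq c1 (tame_norm _ _) (tame_norm _ _)]
  rw [hsol, hsq]
  -- now the valuations are 0 or 1
  have hx'0 : ((x' : ℚ_[p])) ≠ 0 := Units.ne_zero x'
  have hy'0 : ((y' : ℚ_[p])) ≠ 0 := Units.ne_zero y'
  rcases Int.emod_two_eq a with h1 | h1 <;> rcases Int.emod_two_eq b with h2 | h2 <;>
    rw [h1] at hx'v <;> rw [h2] at hy'v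
  · -- (0,0)
    have ht : padicTame p x' y' = 1 := by
      rw [padicTame, hx'v, hy'v]
      simp
    rw [ht]
    have hs : Sol p (x' : ℚ_[p]) (y' : ℚ_[p]) :=
      case00 hp ((norm_eq_one_iff_val hx'0).mpr hx'v) ((norm_eq_one_iff_val hy'0).mpr hy'v)
    simp only [Units.val_one, rQ_one]
    exact iff_of_true hs IsSquare.one
  · -- (0,1)
    have ht : padicTame p x' y' = x' := by
      rw [padicTame, hx'v, hy'v]
      simp
    rw [ht]
    exact case01 hp hx'0 hy'0 hx'v hy'v
  · -- (1,0)
    have ht : padicTame p x' y' = y'⁻¹ := by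
      rw [padicTame, hx'v, hy'v]
      simp
    rw [ht]
    have hy'n : ‖(y' : ℚ_[p])‖ = 1 := (norm_eq_one_iff_val hy'0).mpr hy'v
    have hcoe : ((y'⁻¹ : ℚ_[p]ˣ) : ℚ_[p]) = ((y' : ℚ_[p]))⁻¹ := by
      rw [← Units.val_inv_eq_inv_val]
    rw [hcoe, rQ_inv hy'n, isSquare_inv_iff, sol_symm_iff]
    exact case01 hp hy'0 hx'0 hy'v hx'v
  · -- (1,1)
    have ht : padicTame p x' y' = -(x' * y'⁻¹) := by
      rw [padicTame, hx'v, hy'v]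
      simp [zpow_one]
    rw [ht]
    have hcoe : ((-(x' * y'⁻¹) : ℚ_[p]ˣ) : ℚ_[p]) = -((x' : ℚ_[p]) * ((y' : ℚ_[p]))⁻¹) := by
      rw [Units.val_neg, Units.val_mul, ← Units.val_inv_eq_inv_val]
    rw [hcoe]
    exact case11 hp hx'0 hy'0 hx'v hy'v

/-- The residue mod `p` of a unit of `ℚ_p` of norm at most one (and `0` otherwise,
by convention). -/
noncomputable def padicRes (p : ℕ) [Fact p.Prime] (u : ℚ_[p]ˣ) : ZMod p :=
  if h : ‖(u : ℚ_[p])‖ ≤ 1 then PadicInt.toZMod (⟨(u : ℚ_[p]), h⟩ : ℤ_[p]) else 0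

lemma padicRes_eq_rQ (u : ℚ_[p]ˣ) : padicRes p u = rQ p (u : ℚ_[p]) := rfl

/-- For an odd prime `p` and `x, y ∈ ℚ_pˣ`, the conic `x·R² + y·S² = 1` has a solution
over `ℚ_p` iff `s_p(x,y)^((p-1)/2) = 1`, i.e. iff the tame symbol `s_p(x,y)` is a square
in `(ℤ/pℤ)ˣ`. -/
theorem padic_conic_solvable_iff (p : ℕ) [Fact p.Prime] (hp : p ≠ 2) (x y : ℚ_[p]ˣ) :
    ((∃ R S : ℚ_[p], (x : ℚ_[p]) * R ^ 2 + (y : ℚ_[p]) * S ^ 2 = 1) ↔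
      padicRes p (padicTame p x y) ^ ((p - 1) / 2) = 1) ∧
    ((∃ R S : ℚ_[p], (x : ℚ_[p]) * R ^ 2 + (y : ℚ_[p]) * S ^ 2 = 1) ↔
      IsSquare (padicRes p (padicTame p x y))) := by
  have hmain : (∃ R S : ℚ_[p], (x : ℚ_[p]) * R ^ 2 + (y : ℚ_[p]) * S ^ 2 = 1) ↔
      IsSquare (padicRes p (padicTame p x y)) := by
    rw [padicRes_eq_rQ]
    exact master hp x y
  refine ⟨?_, hmain⟩
  have hs0 : padicRes p (padicTame p x y) ≠ 0 := by
    rw [padicRes_eq_rQ]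
    exact rQ_ne_zero (tame_norm x y)
  have heuler := ZMod.euler_criterion p hs0
  have hexp : (p - 1) / 2 = p / 2 := by
    obtain ⟨k, hk⟩ := (Fact.out : p.Prime).odd_of_ne_two hp
    omega
  rw [hexp]
  exact hmain.trans heuler
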